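/- Let Q be a poset with finite downsets and let P ⊆ Q be an initial scaffold of Q. Then the inclusion P ↪ Q is an initial functor; that is, for every q ∈ Q, the subposet {p ∈ P : p ≤ q in Q} with the relations of P is connected. -/

import Mathlib

/-- A single comparability step within `S` with respect to the relation `r`. -/
def StepIn {α : Type*} (S : Set α) (r : α → α → Prop) (x y : α) : Prop :=
  x ∈ S ∧ y ∈ S ∧ (r x y ∨ r y x)

/-- Connectivity of the set `S` equipped with the relation `r`: `S` is nonempty and any
two elements of `S` are joined by a finite zigzag of `r`-steps within `S`. -/
def ConnIn {α : Type*} (S : Set α) (r : α → α → Prop) : Prop :=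
  S.Nonempty ∧ ∀ a ∈ S, ∀ b ∈ S, Relation.ReflTransGen (StepIn S r) a b

/-- Connectivity of a subset of a poset, as a subposet (zigzags of comparabilities). -/
def PosetConn {α : Type*} [LE α] (S : Set α) : Prop := ConnIn S (· ≤ ·)

/-- `a` and `b` lie in `S` in the same connected component of the subposet `S`. -/
def SameComp {α : Type*} [LE α] (S : Set α) (a b : α) : Prop :=
  a ∈ S ∧ b ∈ S ∧ Relation.ReflTransGen (StepIn S (· ≤ ·)) a b

/-- An initial scaffold of the poset `α`: a subposet whose elements are exactly the
elements with disconnected (possibly empty) strict downset, and whose non-identity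
relations `r` consist, for each such element `b` and each connected component of the
strict downset of `b`, of exactly one relation `m < b` with `m` a minimum of `α` in
that component. -/
def IsScaffold {α : Type*} [PartialOrder α] (P : Set α) (r : α → α → Prop) : Prop :=
  P = {q | ¬ PosetConn (Set.Iio q)} ∧
  (∀ a b, r a b → IsMin a ∧ a < b ∧ b ∈ P) ∧
  (∀ b ∈ P, ∀ x ∈ Set.Iio b, ∃! m, r m b ∧ SameComp (Set.Iio b) m x)

/-- If `Q` is a poset with finite downsets and `(P, r)` is an initial scaffold of `Q`,
then the inclusion `P ↪ Q` is an initial functor: for every `q : Q`, the subposet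
`{p ∈ P | p ≤ q}` with the relations of `P` is connected. -/
theorem stmt5 {Q : Type} [PartialOrder Q] (hfin : ∀ q : Q, (Set.Iic q).Finite)
    (P : Set Q) (r : Q → Q → Prop) (hP : IsScaffold P r) :
    ∀ q : Q, ConnIn {p | p ∈ P ∧ p ≤ q} r := by
  obtain ⟨hPset, hr, huniq⟩ := hP
  -- minimal elements belong to P
  have hminP : ∀ m : Q, IsMin m → m ∈ P := by
    intro m hm
    rw [hPset]
    intro hconn
    obtain ⟨⟨x, hx⟩, -⟩ := hconn
    exact lt_irrefl x (lt_of_lt_of_le hx (hm (le_of_lt hx)))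
  -- the set {p ∈ P | p ≤ x} is always nonempty
  have hne : ∀ x : Q, ({p | p ∈ P ∧ p ≤ x} : Set Q).Nonempty := by
    intro x
    obtain ⟨m, hm, hmin⟩ :=
      (hfin x).exists_minimal ⟨x, le_refl x⟩
    have hmmin : IsMin m := by
      intro a ha
      have : a ∈ Set.Iic x := le_trans ha hm
      exact hmin this ha
    exact ⟨m, hminP m hmmin, hm⟩
  have key : ∀ n : ℕ, ∀ q : Q, (hfin q).toFinset.card ≤ n →
      ConnIn {p | p ∈ P ∧ p ≤ q} r := by
    intro n
    induction n with
    | zero =>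
      intro q hq
      exfalso
      have hq' : q ∈ (hfin q).toFinset := by simp
      have := Finset.card_pos.mpr ⟨q, hq'⟩
      omega
    | succ n ih =>
      intro q hq
      have IH : ∀ x, x < q → ConnIn {p | p ∈ P ∧ p ≤ x} r := by
        intro x hx
        apply ih
        have hsub : (hfin x).toFinset ⊂ (hfin q).toFinset := by
          constructor
          · intro a ha
            simp only [Set.Finite.mem_toFinset, Set.mem_Iic] at *
            exact ha.trans hx.le
          · intro h
            have hq' : q ∈ (hfin x).toFinset := h (by simp)
            simp only [Set.Finite.mem_toFinset, Set.mem_Iic] at hq'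
            exact lt_irrefl x (lt_of_lt_of_le hx hq')
        have := Finset.card_lt_card hsub
        omega
      -- monotonicity of zigzags
      have mono : ∀ x, x ≤ q → ∀ a b,
          Relation.ReflTransGen (StepIn {p | p ∈ P ∧ p ≤ x} r) a b →
          Relation.ReflTransGen (StepIn {p | p ∈ P ∧ p ≤ q} r) a b := by
        intro x hx a b h
        refine Relation.ReflTransGen.mono ?_ a b h
        rintro u v ⟨⟨hu, hu2⟩, ⟨hv, hv2⟩, h3⟩
        exact ⟨⟨hu, hu2.trans hx⟩, ⟨hv, hv2.trans hx⟩, h3⟩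
      -- bridge: a ≤-zigzag in Iio q from x to y transports r-connectivity
      have bridge : ∀ x y, Relation.ReflTransGen (StepIn (Set.Iio q) (· ≤ ·)) x y →
          x ∈ Set.Iio q → ∀ a, a ∈ P ∧ a ≤ x → ∀ b, b ∈ P ∧ b ≤ y →
          Relation.ReflTransGen (StepIn {p | p ∈ P ∧ p ≤ q} r) a b := by
        intro x y hpath
        induction hpath with
        | refl =>
          intro hx a ha b hb
          exact mono x hx.le a b ((IH x hx).2 a ha b hb)
        | @tail y z hxy hstep ih2 =>
          obtain ⟨hy, hz, hle⟩ := hstep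
          intro hx a ha b hb
          rcases hle with hle | hle
          · obtain ⟨c, hc⟩ := hne y
            have h1 := ih2 hx a ha c hc
            have h2 := mono z hz.le c b
              ((IH z hz).2 c ⟨hc.1, hc.2.trans hle⟩ b hb)
            exact h1.trans h2
          · exact ih2 hx a ha b ⟨hb.1, hb.2.trans hle⟩
      -- symmetry of steps
      have hsymm : Symmetric (StepIn {p | p ∈ P ∧ p ≤ q} r) := by
        rintro u v ⟨h1, h2, h3⟩
        exact ⟨h2, h1, h3.symm⟩
      refine ⟨hne q, ?_⟩
      by_cases hqP : q ∈ P
      · -- everything connects to q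
        have toq : ∀ a, a ∈ P → a ≤ q →
            Relation.ReflTransGen (StepIn {p | p ∈ P ∧ p ≤ q} r) a q := by
          intro a haP hale
          rcases eq_or_lt_of_le hale with rfl | halt
          · exact Relation.ReflTransGen.refl
          · obtain ⟨m, ⟨hrm, hmI, haI, hpath⟩, -⟩ := huniq q hqP a halt
            have hm := hr m q hrm
            have hmP : m ∈ P := hminP m hm.1
            have h1 : Relation.ReflTransGen (StepIn {p | p ∈ P ∧ p ≤ q} r) m a :=
              bridge m a hpath hmI m ⟨hmP, le_refl m⟩ a ⟨haP, le_refl a⟩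
            have h2 : Relation.ReflTransGen (StepIn {p | p ∈ P ∧ p ≤ q} r) a m :=
              (@Relation.ReflTransGen.stdSymm _ _ ⟨fun _ _ h => hsymm h⟩).symm _ _ h1
            exact h2.tail ⟨⟨hmP, hm.2.1.le⟩, ⟨hqP, le_refl q⟩, Or.inl hrm⟩
        intro a ha b hb
        exact (toq a ha.1 ha.2).trans
          ((@Relation.ReflTransGen.stdSymm _ _ ⟨fun _ _ h => hsymm h⟩).symm _ _ (toq b hb.1 hb.2))
      · -- Iio q is connected
        have hconn : PosetConn (Set.Iio q) := by
          rw [hPset] at hqP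
          simpa only [Set.mem_setOf_eq, not_not] using hqP
        intro a ha b hb
        have halt : a < q := lt_of_le_of_ne ha.2 (by rintro rfl; exact hqP ha.1)
        have hblt : b < q := lt_of_le_of_ne hb.2 (by rintro rfl; exact hqP hb.1)
        exact bridge a b (hconn.2 a halt b hblt) halt a ⟨ha.1, le_refl a⟩
          b ⟨hb.1, le_refl b⟩
  intro q
  exact key ((hfin q).toFinset.card) q le_rfl
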